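/- arXiv:2004.05308 — 2 statements merged into one kernel-verified Lean document; each statement's English description precedes it below -/
import Mathlib

section
/- Let X₁,…,Xₙ be i.i.d. with CDF F and let X_{l:n} ≤ X_{r:n} be the l-th and r-th order statistics with l < r, and fix 0 < T₁ < T₂. Define the test duration ξ = min( max(X_{l:n}, T₂), max(X_{r:n}, T₁) ). Then E[ξ] = E[X_{l:n}] + T₁ + E[min(X_{r:n},T₂)] - E[min(X_{l:n},T₂)] - E[min(X_{r:n},T₁)], provided all expectations are finite. -/
open MeasureTheory

/-- Expected duration of a Type-II unified hybrid censored life test.  Here `Xl` and `Xr`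
denote the `l`-th and `r`-th order statistics (so `Xl ≤ Xr` pointwise) of an i.i.d. sample,
`0 < T₁ < T₂` are the two censoring times, and the test duration is
`ξ = min(max(Xl,T₂), max(Xr,T₁))`.  Then
`E[ξ] = E[Xl] + T₁ + E[min(Xr,T₂)] - E[min(Xl,T₂)] - E[min(Xr,T₁)]`. -/
theorem expected_duration_typeII_UHCS {Ω : Type*} [MeasurableSpace Ω]
    (μ : Measure Ω) [IsProbabilityMeasure μ] (Xl Xr : Ω → ℝ) (T₁ T₂ : ℝ)
    (hle : ∀ ω, Xl ω ≤ Xr ω) (hT₁ : 0 < T₁) (hT : T₁ < T₂)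
    (hXl : Integrable Xl μ) (hXr : Integrable Xr μ) :
    ∫ ω, min (max (Xl ω) T₂) (max (Xr ω) T₁) ∂μ =
      ∫ ω, Xl ω ∂μ + T₁ + ∫ ω, min (Xr ω) T₂ ∂μ
        - ∫ ω, min (Xl ω) T₂ ∂μ - ∫ ω, min (Xr ω) T₁ ∂μ := by
  have key : ∀ ω, min (max (Xl ω) T₂) (max (Xr ω) T₁) =
      Xl ω + T₁ + min (Xr ω) T₂ - min (Xl ω) T₂ - min (Xr ω) T₁ := by
    intro ω
    have := hle ω
    simp only [min_def, max_def]
    split_ifs <;> linarith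
  simp_rw [key]
  have h1 : Integrable (fun ω => min (Xr ω) T₂) μ := hXr.inf (integrable_const _)
  have h2 : Integrable (fun ω => min (Xl ω) T₂) μ := hXl.inf (integrable_const _)
  have h3 : Integrable (fun ω => min (Xr ω) T₁) μ := hXr.inf (integrable_const _)
  have hB : Integrable (fun ω => Xl ω + T₁) μ := hXl.add (integrable_const _)
  have hA : Integrable (fun ω => Xl ω + T₁ + min (Xr ω) T₂) μ := hB.add h1
  have hC : Integrable (fun ω => Xl ω + T₁ + min (Xr ω) T₂ - min (Xl ω) T₂) μ := hA.sub h2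
  rw [integral_sub hC h3, integral_sub hA h2, integral_add hB h1, integral_add hXl (integrable_const _),
    integral_const]
  simp
end

section
/- Let l < r ≤ n, T₁ < T₂, and define the Type-II unified hybrid censoring number of failures D = #{i : X_{i:n} ≤ ξ} where ξ = min( max(X_{l:n}, T₂), max(X_{r:n}, T₁) ). Then E[D] = l + n·F(T₁) + Σ_{i=1}^{r} F_{i:n}(T₂) - Σ_{i=1}^{l} F_{i:n}(T₂) - Σ_{i=1}^{r} F_{i:n}(T₁), assuming F is continuous. -/
open MeasureTheory ProbabilityTheory Finset

section listAux

theorem uhcsSorted_getElem_le_iff {s : List ℝ} (hs : s.Pairwise (· ≤ ·)) {j : ℕ} (hj : j < s.length)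
    (t : ℝ) : s[j] ≤ t ↔ j < s.countP (fun x => decide (x ≤ t)) := by
  have mono : ∀ a b (ha : a < s.length) (hb : b < s.length), a ≤ b → s[a] ≤ s[b] := by
    intro a b ha hb hab
    exact hs.rel_get_of_le (by exact_mod_cast hab : (⟨a, ha⟩ : Fin s.length) ≤ ⟨b, hb⟩)
  have hsplit : ∀ k, s.countP (fun x => decide (x ≤ t)) =
      (s.take k).countP (fun x => decide (x ≤ t)) + (s.drop k).countP (fun x => decide (x ≤ t)) := by
    intro k; rw [← List.countP_append, List.take_append_drop]
  constructor
  · intro h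
    have h2 : (s.take (j+1)).countP (fun x => decide (x ≤ t)) = (s.take (j+1)).length := by
      rw [List.countP_eq_length]
      intro a ha
      rw [List.mem_iff_getElem] at ha
      obtain ⟨m, hm, rfl⟩ := ha
      have hm2 : m < j + 1 := lt_of_lt_of_le hm (by rw [List.length_take]; exact min_le_left _ _)
      simp only [List.getElem_take]
      simpa using le_trans (mono m j (by omega) hj (by omega)) h
    have h3 : (s.take (j+1)).length = j + 1 := by
      rw [List.length_take]; omega
    calc j < j + 1 := by omega
      _ = (s.take (j+1)).countP _ := by rw [h2, h3]
      _ ≤ _ := by rw [hsplit (j+1)]; omega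
  · intro h
    by_contra hc
    push_neg at hc
    have h4 : (s.drop j).countP (fun x => decide (x ≤ t)) = 0 := by
      rw [List.countP_eq_zero]
      intro a ha
      rw [List.mem_iff_getElem] at ha
      obtain ⟨m, hm, rfl⟩ := ha
      have hm2 : j + m < s.length := by rw [List.length_drop] at hm; omega
      rw [List.getElem_drop]
      simpa using lt_of_lt_of_le hc (mono j (j+m) hj hm2 (by omega))
    have h5 : (s.take j).countP (fun x => decide (x ≤ t)) ≤ j := by
      calc _ ≤ (s.take j).length := List.countP_le_length
        _ ≤ j := by rw [List.length_take]; omega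
    rw [hsplit j, h4] at h
    omega

theorem uhcsCountP_ofFn_eq (n : ℕ) (f : Fin n → ℝ) (t : ℝ) :
    (List.ofFn f).countP (fun x => decide (x ≤ t)) = (univ.filter fun j => f j ≤ t).card := by
  induction n with
  | zero => simp
  | succ m ih =>
    have key : (Finset.filter (fun j => f j ≤ t) (univ.map ⟨Fin.succ, Fin.succ_injective m⟩)) =
        (Finset.filter (fun j => f j.succ ≤ t) univ).map ⟨Fin.succ, Fin.succ_injective m⟩ := by
      rw [Finset.filter_map]; rfl
    rw [List.ofFn_succ, List.countP_cons, ih (fun j => f j.succ), Fin.univ_succ,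
      Finset.filter_cons]
    by_cases h : f 0 ≤ t
    · simp only [h, if_pos, key, decide_true]
      rw [Finset.cons_eq_insert, Finset.card_insert_of_notMem (by simp [Fin.succ_ne_zero]),
        Finset.card_map]
    · simp [h, key]

end listAux

/-- The `i`-th order statistic (1-indexed) of the sample `X₁,…,Xₙ`:
the `i`-th smallest of the values `X j ω`. -/
noncomputable def orderStat {Ω : Type*} (n : ℕ) (X : Fin n → Ω → ℝ) (i : ℕ) (ω : Ω) : ℝ :=
  ((List.ofFn fun j => X j ω).insertionSort (· ≤ ·)).getD (i - 1) 0

section orderStatAux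

variable {Ω : Type*} {n : ℕ} (X : Fin n → Ω → ℝ)

theorem uhcsCountP_sort_eq (ω : Ω) (t : ℝ) :
    ((List.ofFn fun j => X j ω).insertionSort (· ≤ ·)).countP (fun x => decide (x ≤ t)) =
      (univ.filter fun j => X j ω ≤ t).card := by
  rw [(List.perm_insertionSort _ _).countP_eq, uhcsCountP_ofFn_eq]

theorem uhcsOrderStat_le_iff {i : ℕ} (hi1 : 1 ≤ i) (hin : i ≤ n) (ω : Ω) (t : ℝ) :
    orderStat n X i ω ≤ t ↔ i ≤ (univ.filter fun j => X j ω ≤ t).card := by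
  set s := (List.ofFn fun j => X j ω).insertionSort (· ≤ ·) with hsdef
  have hlen : s.length = n := by
    rw [hsdef, List.length_insertionSort, List.length_ofFn]
  have hj : i - 1 < s.length := by omega
  rw [orderStat, ← hsdef, List.getD_eq_getElem _ _ hj,
    uhcsSorted_getElem_le_iff (List.pairwise_insertionSort _ _) hj, uhcsCountP_sort_eq]
  omega

theorem uhcsCard_filter_orderStat {i : ℕ} (hi1 : 1 ≤ i) (hin : i ≤ n) (ω : Ω)
    (hinj : Function.Injective fun j => X j ω) :
    (univ.filter fun j => X j ω ≤ orderStat n X i ω).card = i := by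
  set s := (List.ofFn fun j => X j ω).insertionSort (· ≤ ·) with hsdef
  have hlen : s.length = n := by
    rw [hsdef, List.length_insertionSort, List.length_ofFn]
  have hnd : s.Nodup := ((List.perm_insertionSort _ _).nodup_iff).mpr
    (List.nodup_ofFn.mpr hinj)
  have hsort := List.pairwise_insertionSort (· ≤ ·) (List.ofFn fun j => X j ω)
  have hstrict : StrictMono s.get :=
    (show Monotone s.get from fun a b hab => hsort.rel_get_of_le hab).strictMono_of_injective (List.nodup_iff_injective_get.mp hnd)
  have hle : i ≤ (univ.filter fun j => X j ω ≤ orderStat n X i ω).card :=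
    (uhcsOrderStat_le_iff X hi1 hin ω _).mp le_rfl
  rcases eq_or_lt_of_le hin with rfl | hlt
  · have := (Finset.card_filter_le univ fun j => X j ω ≤ orderStat i X i ω)
    simp only [Finset.card_univ, Fintype.card_fin] at this
    omega
  · by_contra hne
    have hgt : i + 1 ≤ (univ.filter fun j => X j ω ≤ orderStat n X i ω).card := by omega
    have h2 : orderStat n X (i+1) ω ≤ orderStat n X i ω :=
      (uhcsOrderStat_le_iff X (by omega) (by omega) ω _).mpr hgt
    have h3 : orderStat n X i ω < orderStat n X (i+1) ω := by
      show s.getD (i-1) 0 < s.getD (i+1-1) 0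
      rw [List.getD_eq_getElem _ _ (show i - 1 < s.length by omega),
        List.getD_eq_getElem _ _ (show i + 1 - 1 < s.length by omega)]
      have := hstrict (show (⟨i-1, by omega⟩ : Fin s.length) < ⟨i+1-1, by omega⟩ by
        simp [Fin.lt_def]; omega)
      simpa [List.get_eq_getElem] using this
    linarith

theorem uhcsPointwise_key {l r : ℕ} (hl : 1 ≤ l) (hlr : l < r) (hrn : r ≤ n) {T₁ T₂ : ℝ}
    (hT : T₁ < T₂) (ω : Ω) (hinj : Function.Injective fun j => X j ω) :
    ((univ.filter fun i =>
        X i ω ≤ min (max (orderStat n X l ω) T₂) (max (orderStat n X r ω) T₁)).card : ℕ) =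
      l + ((Icc (l+1) r).filter fun i => orderStat n X i ω ≤ T₂).card
        + ((Icc (r+1) n).filter fun i => orderStat n X i ω ≤ T₁).card := by
  set N : ℝ → ℕ := fun t => (univ.filter fun j => X j ω ≤ t).card with hN
  have hmono : Monotone N := by
    intro a b hab
    apply Finset.card_le_card
    intro j hj
    simp only [Finset.mem_filter] at *
    exact ⟨hj.1, hj.2.trans hab⟩
  have hmax : ∀ a b : ℝ, N (max a b) = max (N a) (N b) := by
    intro a b
    rcases le_total a b with h | h
    · rw [max_eq_right h, max_eq_right (hmono h)]
    · rw [max_eq_left h, max_eq_left (hmono h)]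
  have hmin : ∀ a b : ℝ, N (min a b) = min (N a) (N b) := by
    intro a b
    rcases le_total a b with h | h
    · rw [min_eq_left h, min_eq_left (hmono h)]
    · rw [min_eq_right h, min_eq_right (hmono h)]
  have hNl : N (orderStat n X l ω) = l := uhcsCard_filter_orderStat X hl (by omega) ω hinj
  have hNr : N (orderStat n X r ω) = r := uhcsCard_filter_orderStat X (by omega) hrn ω hinj
  have hNle : N T₁ ≤ N T₂ := hmono hT.le
  have hNn : ∀ t, N t ≤ n := fun t => by
    simpa using (Finset.card_filter_le univ fun j => X j ω ≤ t)
  have hA : ((Icc (l+1) r).filter fun i => orderStat n X i ω ≤ T₂) =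
      Icc (l+1) (min r (N T₂)) := by
    ext i
    simp only [Finset.mem_filter, Finset.mem_Icc, le_min_iff]
    constructor
    · rintro ⟨⟨h1, h2⟩, h3⟩
      exact ⟨h1, h2, (uhcsOrderStat_le_iff X (by omega) (by omega) ω T₂).mp h3⟩
    · rintro ⟨h1, h2, h3⟩
      exact ⟨⟨h1, h2⟩, (uhcsOrderStat_le_iff X (by omega) (by omega) ω T₂).mpr h3⟩
  have hB : ((Icc (r+1) n).filter fun i => orderStat n X i ω ≤ T₁) =
      Icc (r+1) (min n (N T₁)) := by
    ext i
    simp only [Finset.mem_filter, Finset.mem_Icc, le_min_iff]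
    constructor
    · rintro ⟨⟨h1, h2⟩, h3⟩
      exact ⟨h1, h2, (uhcsOrderStat_le_iff X (by omega) (by omega) ω T₁).mp h3⟩
    · rintro ⟨h1, h2, h3⟩
      exact ⟨⟨h1, h2⟩, (uhcsOrderStat_le_iff X (by omega) (by omega) ω T₁).mpr h3⟩
  have hLHS : (univ.filter fun i =>
        X i ω ≤ min (max (orderStat n X l ω) T₂) (max (orderStat n X r ω) T₁)).card
      = min (max l (N T₂)) (max r (N T₁)) := by
    show N _ = _
    rw [hmin, hmax, hmax, hNl, hNr]
  rw [hLHS, hA, hB, Nat.card_Icc, Nat.card_Icc]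
  have := hNn T₁; have := hNn T₂
  omega

end orderStatAux

section measureAux

variable {Ω : Type*} [MeasurableSpace Ω] (μ : Measure Ω) [IsProbabilityMeasure μ]
  {n : ℕ} (X : Fin n → Ω → ℝ) (F : ℝ → ℝ)

theorem uhcsAtom_null (i : Fin n) (hmeas : ∀ i, Measurable (X i))
    (hF : ∀ i s, (μ {ω | X i ω ≤ s}).toReal = F s) (hcont : Continuous F) (x : ℝ) :
    μ {ω | X i ω = x} = 0 := by
  have hms : ∀ s : ℝ, MeasurableSet {ω | X i ω ≤ s} := fun s =>
    measurableSet_le (hmeas i) measurable_const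
  have key : ∀ δ : ℝ, 0 < δ → (μ {ω | X i ω = x}).toReal ≤ F x - F (x - δ) := by
    intro δ hδ
    have hsub : {ω | X i ω = x} ∪ {ω | X i ω ≤ x - δ} ⊆ {ω | X i ω ≤ x} := by
      rintro ω (h | h) <;> simp only [Set.mem_setOf_eq] at *
      · exact le_of_eq h
      · linarith
    have hdisj : Disjoint {ω | X i ω = x} {ω | X i ω ≤ x - δ} := by
      rw [Set.disjoint_left]
      rintro ω h1 h2
      simp only [Set.mem_setOf_eq] at h1 h2
      linarith [h1 ▸ h2]
    have hunion : μ {ω | X i ω = x} + μ {ω | X i ω ≤ x - δ} ≤ μ {ω | X i ω ≤ x} := by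
      rw [← measure_union hdisj (hms (x - δ))]
      exact measure_mono hsub
    have h1 : (μ {ω | X i ω = x}).toReal + F (x - δ) ≤ F x := by
      rw [← hF i (x - δ), ← hF i x,
        ← ENNReal.toReal_add (measure_ne_top μ _) (measure_ne_top μ _)]
      exact ENNReal.toReal_mono (measure_ne_top μ _) hunion
    linarith
  have htend : Filter.Tendsto (fun k : ℕ => F x - F (x - 1 / (k + 1))) Filter.atTop (nhds 0) := by
    have h1 : Filter.Tendsto (fun k : ℕ => x - 1 / (k + 1 : ℝ)) Filter.atTop (nhds x) := by
      have := tendsto_one_div_add_atTop_nhds_zero_nat (𝕜 := ℝ)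
      simpa using Filter.Tendsto.sub (tendsto_const_nhds (x := x)) this
    have := (hcont.tendsto x).comp h1
    simpa using Filter.Tendsto.sub (tendsto_const_nhds (x := F x)) this
  have hle : (μ {ω | X i ω = x}).toReal ≤ 0 := by
    apply ge_of_tendsto htend
    filter_upwards with k
    exact key _ (by positivity)
  have : (μ {ω | X i ω = x}).toReal = 0 :=
    le_antisymm hle ENNReal.toReal_nonneg
  exact (ENNReal.toReal_eq_zero_iff _).mp this |>.resolve_right (measure_ne_top μ _)

theorem uhcsPair_null (hmeas : ∀ i, Measurable (X i))
    (hindep : iIndepFun X μ)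
    (hF : ∀ i s, (μ {ω | X i ω ≤ s}).toReal = F s) (hcont : Continuous F)
    {i j : Fin n} (hij : i ≠ j) : μ {ω | X i ω = X j ω} = 0 := by
  have hIndep : IndepFun (X i) (X j) μ := hindep.indepFun hij
  have hmap : μ.map (fun ω => (X i ω, X j ω)) = (μ.map (X i)).prod (μ.map (X j)) :=
    (indepFun_iff_map_prod_eq_prod_map_map (hmeas i).aemeasurable (hmeas j).aemeasurable).mp hIndep
  have hdiag : MeasurableSet {p : ℝ × ℝ | p.1 = p.2} :=
    measurableSet_eq_fun measurable_fst measurable_snd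
  have h1 : μ {ω | X i ω = X j ω} =
      μ.map (fun ω => (X i ω, X j ω)) {p : ℝ × ℝ | p.1 = p.2} := by
    rw [Measure.map_apply ((hmeas i).prodMk (hmeas j)) hdiag]
    rfl
  have h2 : ∀ x : ℝ, (μ.map (X j)) (Prod.mk x ⁻¹' {p : ℝ × ℝ | p.1 = p.2}) = 0 := by
    intro x
    have hpre : (Prod.mk x ⁻¹' {p : ℝ × ℝ | p.1 = p.2}) = {x} := by
      ext y; simp [eq_comm]
    rw [hpre, Measure.map_apply (hmeas j) (measurableSet_singleton x)]
    have : X j ⁻¹' {x} = {ω | X j ω = x} := rfl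
    rw [this]
    exact uhcsAtom_null μ X F j hmeas hF hcont x
  rw [h1, hmap, Measure.prod_apply hdiag, lintegral_congr h2, lintegral_zero]

theorem uhcsMeasurable_N (hmeas : ∀ i, Measurable (X i)) (t : ℝ) :
    Measurable (fun ω => ((univ.filter fun j => X j ω ≤ t).card : ℕ)) := by
  have h : (fun ω => ((univ.filter fun j => X j ω ≤ t).card : ℕ)) =
      fun ω => ∑ j : Fin n, if X j ω ≤ t then 1 else 0 := by
    funext ω; rw [Finset.card_filter]
  rw [h]
  exact Finset.measurable_sum univ fun j _ =>
    Measurable.ite (measurableSet_le (hmeas j) measurable_const) measurable_const measurable_const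

theorem uhcsMeasurableSet_orderStat_le (hmeas : ∀ i, Measurable (X i)) {i : ℕ}
    (hi1 : 1 ≤ i) (hin : i ≤ n) (t : ℝ) : MeasurableSet {ω | orderStat n X i ω ≤ t} := by
  have h : {ω | orderStat n X i ω ≤ t} =
      (fun ω => ((univ.filter fun j => X j ω ≤ t).card : ℕ)) ⁻¹' (Set.Ici i) := by
    ext ω; simp [uhcsOrderStat_le_iff X hi1 hin ω t]
  rw [h]
  exact uhcsMeasurable_N X hmeas t measurableSet_Ici

theorem uhcsIntegral_ite_le {g : Ω → ℝ} {t : ℝ}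
    (hS : MeasurableSet {ω | g ω ≤ t}) :
    ∫ ω, (if g ω ≤ t then (1:ℝ) else 0) ∂μ = (μ {ω | g ω ≤ t}).toReal := by
  have h : (fun ω => if g ω ≤ t then (1:ℝ) else 0) =
      Set.indicator {ω | g ω ≤ t} (fun _ => (1:ℝ)) := by
    funext ω; simp [Set.indicator_apply, Set.mem_setOf_eq]
  rw [h, integral_indicator_const _ hS, smul_eq_mul, mul_one]
  rfl

theorem uhcsIntegrable_ite_le {g : Ω → ℝ} {t : ℝ}
    (hS : MeasurableSet {ω | g ω ≤ t}) :
    Integrable (fun ω => if g ω ≤ t then (1:ℝ) else 0) μ := by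
  have h : (fun ω => if g ω ≤ t then (1:ℝ) else 0) =
      Set.indicator {ω | g ω ≤ t} (fun _ => (1:ℝ)) := by
    funext ω; simp [Set.indicator_apply, Set.mem_setOf_eq]
  rw [h]
  exact (integrable_const (1:ℝ)).indicator hS

end measureAux

/-- Expected number of failures under the Type-II unified hybrid censoring scheme:
with `l < r ≤ n`, `0 < T₁ < T₂`, stopping time
`ξ = min(max(X_{l:n},T₂), max(X_{r:n},T₁))` and `D = #{i : Xᵢ ≤ ξ}`, for an i.i.d.
sample with continuous common CDF `F`,
`E[D] = l + n·F(T₁) + ∑_{i=1}^{r} F_{i:n}(T₂) - ∑_{i=1}^{l} F_{i:n}(T₂) - ∑_{i=1}^{r} F_{i:n}(T₁)`. -/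
theorem expected_failures_typeII_UHCS {Ω : Type*} [MeasurableSpace Ω]
    (μ : Measure Ω) [IsProbabilityMeasure μ] (n l r : ℕ) (hl : 1 ≤ l) (hlr : l < r)
    (hrn : r ≤ n) (T₁ T₂ : ℝ) (hT₁ : 0 < T₁) (hT : T₁ < T₂)
    (X : Fin n → Ω → ℝ) (F : ℝ → ℝ)
    (hmeas : ∀ i, Measurable (X i))
    (hindep : iIndepFun X μ)
    (hF : ∀ i s, (μ {ω | X i ω ≤ s}).toReal = F s)
    (hcont : Continuous F) :
    ∫ ω, ((univ.filter fun i =>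
        X i ω ≤ min (max (orderStat n X l ω) T₂) (max (orderStat n X r ω) T₁)).card : ℝ) ∂μ =
      l + n * F T₁ + ∑ i ∈ Icc 1 r, (μ {ω | orderStat n X i ω ≤ T₂}).toReal
        - ∑ i ∈ Icc 1 l, (μ {ω | orderStat n X i ω ≤ T₂}).toReal
        - ∑ i ∈ Icc 1 r, (μ {ω | orderStat n X i ω ≤ T₁}).toReal := by
  -- the bad (ties) event is null
  have hbad : μ {ω | ¬ Function.Injective fun j => X j ω} = 0 := by
    refine measure_mono_null ?_ (measure_iUnion_null
      (fun p : Fin n × Fin n => measure_iUnion_null fun hp : p.1 ≠ p.2 =>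
        uhcsPair_null μ X F hmeas hindep hF hcont hp))
    intro ω hω
    simp only [Set.mem_setOf_eq, Function.not_injective_iff] at hω
    obtain ⟨a, b, hab, hne⟩ := hω
    exact Set.mem_iUnion.mpr ⟨(a, b), Set.mem_iUnion.mpr ⟨hne, hab⟩⟩
  -- the a.e. pointwise identity
  have hae : (fun ω => ((univ.filter fun i =>
        X i ω ≤ min (max (orderStat n X l ω) T₂) (max (orderStat n X r ω) T₁)).card : ℝ)) =ᵐ[μ]
      (fun ω => (l : ℝ) + (∑ i ∈ Icc (l+1) r, if orderStat n X i ω ≤ T₂ then (1:ℝ) else 0)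
        + (∑ i ∈ Icc (r+1) n, if orderStat n X i ω ≤ T₁ then (1:ℝ) else 0)) := by
    rw [Filter.eventuallyEq_iff_exists_mem]
    refine ⟨{ω | Function.Injective fun j => X j ω}, ?_, ?_⟩
    · rw [mem_ae_iff]
      simpa [Set.compl_def] using hbad
    · intro ω hω
      have := uhcsPointwise_key X hl hlr hrn hT ω hω
      have hc1 : (((Icc (l+1) r).filter fun i => orderStat n X i ω ≤ T₂).card : ℝ) =
          ∑ i ∈ Icc (l+1) r, if orderStat n X i ω ≤ T₂ then (1:ℝ) else 0 := by
        rw [Finset.card_filter]; push_cast; rfl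
      have hc2 : (((Icc (r+1) n).filter fun i => orderStat n X i ω ≤ T₁).card : ℝ) =
          ∑ i ∈ Icc (r+1) n, if orderStat n X i ω ≤ T₁ then (1:ℝ) else 0 := by
        rw [Finset.card_filter]; push_cast; rfl
      calc ((univ.filter fun i =>
            X i ω ≤ min (max (orderStat n X l ω) T₂) (max (orderStat n X r ω) T₁)).card : ℝ)
          = ((l + ((Icc (l+1) r).filter fun i => orderStat n X i ω ≤ T₂).card
            + ((Icc (r+1) n).filter fun i => orderStat n X i ω ≤ T₁).card : ℕ) : ℝ) := by
            exact congrArg (fun k : ℕ => (k : ℝ)) this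
        _ = _ := by push_cast [hc1, hc2]; ring
  rw [integral_congr_ae hae]
  -- compute the integral of the simple function
  have hmA : ∀ i ∈ Icc (l+1) r, MeasurableSet {ω | orderStat n X i ω ≤ T₂} := fun i hi => by
    rw [Finset.mem_Icc] at hi
    exact uhcsMeasurableSet_orderStat_le X hmeas (by omega) (by omega) T₂
  have hmB : ∀ i ∈ Icc (r+1) n, MeasurableSet {ω | orderStat n X i ω ≤ T₁} := fun i hi => by
    rw [Finset.mem_Icc] at hi
    exact uhcsMeasurableSet_orderStat_le X hmeas (by omega) (by omega) T₁
  have hintA : Integrable (fun ω => ∑ i ∈ Icc (l+1) r,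
      if orderStat n X i ω ≤ T₂ then (1:ℝ) else 0) μ :=
    integrable_finset_sum _ fun i hi => uhcsIntegrable_ite_le μ (hmA i hi)
  have hintB : Integrable (fun ω => ∑ i ∈ Icc (r+1) n,
      if orderStat n X i ω ≤ T₁ then (1:ℝ) else 0) μ :=
    integrable_finset_sum _ fun i hi => uhcsIntegrable_ite_le μ (hmB i hi)
  have hcint : Integrable (fun _ : Ω => (l:ℝ)) μ := integrable_const _
  have hfint : Integrable (fun ω => (l:ℝ) + ∑ i ∈ Icc (l+1) r,
      if orderStat n X i ω ≤ T₂ then (1:ℝ) else 0) μ := hcint.add hintA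
  rw [integral_add hfint hintB, integral_add hcint hintA, integral_const, integral_finset_sum _
      (fun i hi => uhcsIntegrable_ite_le μ (hmA i hi)), integral_finset_sum _
      (fun i hi => uhcsIntegrable_ite_le μ (hmB i hi))]
  simp only [probReal_univ, ENNReal.toReal_one, one_smul]
  rw [Finset.sum_congr rfl (fun i hi => uhcsIntegral_ite_le μ (hmA i hi)),
    Finset.sum_congr rfl (fun i hi => uhcsIntegral_ite_le μ (hmB i hi))]
  -- total sum lemma : ∑_{i=1}^n P(X_{i:n} ≤ t) = n * F t
  have htotal : ∀ t : ℝ, ∑ i ∈ Icc 1 n, (μ {ω | orderStat n X i ω ≤ t}).toReal = n * F t := by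
    intro t
    have hpt : ∀ ω, (∑ i ∈ Icc 1 n, if orderStat n X i ω ≤ t then (1:ℝ) else 0) =
        ∑ j : Fin n, if X j ω ≤ t then (1:ℝ) else 0 := by
      intro ω
      have e1 : (∑ i ∈ Icc 1 n, if orderStat n X i ω ≤ t then (1:ℝ) else 0) =
          (((Icc 1 n).filter fun i => orderStat n X i ω ≤ t).card : ℝ) := by
        rw [Finset.card_filter]; push_cast; rfl
      have e2 : (∑ j : Fin n, if X j ω ≤ t then (1:ℝ) else 0) =
          ((univ.filter fun j => X j ω ≤ t).card : ℝ) := by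
        rw [Finset.card_filter]; push_cast; rfl
      rw [e1, e2]
      norm_cast
      set N := (univ.filter fun j => X j ω ≤ t).card with hNdef
      have hNn : N ≤ n := by simpa using (Finset.card_filter_le univ fun j => X j ω ≤ t)
      have hflt : ((Icc 1 n).filter fun i => orderStat n X i ω ≤ t) = Icc 1 (min n N) := by
        ext i
        simp only [Finset.mem_filter, Finset.mem_Icc, le_min_iff]
        constructor
        · rintro ⟨⟨h1, h2⟩, h3⟩
          exact ⟨h1, h2, (uhcsOrderStat_le_iff X h1 h2 ω t).mp h3⟩
        · rintro ⟨h1, h2, h3⟩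
          exact ⟨⟨h1, h2⟩, (uhcsOrderStat_le_iff X h1 h2 ω t).mpr h3⟩
      rw [hflt, Nat.card_Icc]
      omega
    have hmI : ∀ i ∈ Icc 1 n, MeasurableSet {ω | orderStat n X i ω ≤ t} := fun i hi => by
      rw [Finset.mem_Icc] at hi
      exact uhcsMeasurableSet_orderStat_le X hmeas hi.1 hi.2 t
    have hmJ : ∀ j : Fin n, MeasurableSet {ω | X j ω ≤ t} := fun j =>
      measurableSet_le (hmeas j) measurable_const
    calc ∑ i ∈ Icc 1 n, (μ {ω | orderStat n X i ω ≤ t}).toReal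
        = ∑ i ∈ Icc 1 n, ∫ ω, (if orderStat n X i ω ≤ t then (1:ℝ) else 0) ∂μ :=
          Finset.sum_congr rfl fun i hi => (uhcsIntegral_ite_le μ (hmI i hi)).symm
      _ = ∫ ω, (∑ i ∈ Icc 1 n, if orderStat n X i ω ≤ t then (1:ℝ) else 0) ∂μ :=
          (integral_finset_sum _ fun i hi => uhcsIntegrable_ite_le μ (hmI i hi)).symm
      _ = ∫ ω, (∑ j : Fin n, if X j ω ≤ t then (1:ℝ) else 0) ∂μ := by
          exact integral_congr_ae (Filter.Eventually.of_forall hpt)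
      _ = ∑ j : Fin n, ∫ ω, (if X j ω ≤ t then (1:ℝ) else 0) ∂μ :=
          integral_finset_sum _ fun j _ => uhcsIntegrable_ite_le μ (hmJ j)
      _ = ∑ j : Fin n, (μ {ω | X j ω ≤ t}).toReal :=
          Finset.sum_congr rfl fun j _ => uhcsIntegral_ite_le μ (hmJ j)
      _ = ∑ j : Fin n, F t := Finset.sum_congr rfl fun j _ => hF j t
      _ = n * F t := by rw [Finset.sum_const, Finset.card_univ, Fintype.card_fin, nsmul_eq_mul]
  -- final algebra
  rw [← htotal T₁]
  have hsplit1 : ∑ i ∈ Icc 1 r, (μ {ω | orderStat n X i ω ≤ T₂}).toReal =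
      (∑ i ∈ Icc 1 l, (μ {ω | orderStat n X i ω ≤ T₂}).toReal) +
      ∑ i ∈ Icc (l+1) r, (μ {ω | orderStat n X i ω ≤ T₂}).toReal := by
    rw [show Icc 1 r = Finset.Ioc 0 r from by rw [← Finset.Icc_add_one_left_eq_Ioc, zero_add],
      show Icc 1 l = Finset.Ioc 0 l from by rw [← Finset.Icc_add_one_left_eq_Ioc, zero_add],
      show Icc (l+1) r = Finset.Ioc l r from by rw [← Finset.Icc_add_one_left_eq_Ioc]]
    exact (Finset.sum_Ioc_consecutive _ (by omega) (by omega)).symm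
  have hsplit2 : ∑ i ∈ Icc 1 n, (μ {ω | orderStat n X i ω ≤ T₁}).toReal =
      (∑ i ∈ Icc 1 r, (μ {ω | orderStat n X i ω ≤ T₁}).toReal) +
      ∑ i ∈ Icc (r+1) n, (μ {ω | orderStat n X i ω ≤ T₁}).toReal := by
    rw [show Icc 1 n = Finset.Ioc 0 n from by rw [← Finset.Icc_add_one_left_eq_Ioc, zero_add],
      show Icc 1 r = Finset.Ioc 0 r from by rw [← Finset.Icc_add_one_left_eq_Ioc, zero_add],
      show Icc (r+1) n = Finset.Ioc r n from by rw [← Finset.Icc_add_one_left_eq_Ioc]]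
    exact (Finset.sum_Ioc_consecutive _ (by omega) (by omega)).symm
  rw [hsplit1, hsplit2]
  ring
end
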